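/- With the orbit formula (T(s)0)(u) = f(u−s) for u ≥ 0 and (T(s)0)(−1) = 0, the Cesàro means of the orbit of 0 converge to 0 in norm: lim_{t→∞} ‖(1/t) ∫₀ᵗ T(s)0 ds‖ = 0; indeed ‖(1/t) ∫₀ᵗ T(s)0 ds‖ ≤ 2/t for t ≥ 2. -/

import Mathlib

open MeasureTheory intervalIntegral Filter

noncomputable section

/-- `Ω = {−1} ∪ [0,∞)`. -/
def Omega : Set ℝ := {-1} ∪ Set.Ici 0

/-- `E` is the Banach space of bounded continuous functions on `Ω` with sup norm. -/
abbrev E := BoundedContinuousFunction (↥Omega) ℝ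

/-- The profile function `f`. -/
def f (u : ℝ) : ℝ :=
  if 0 ≤ u then 0 else if -1 ≤ u then -u else if -2 ≤ u then u + 2 else 0

lemma f_eq (u : ℝ) : f u = max 0 (min (-u) (u + 2)) := by
  unfold f
  split_ifs with h1 h2 h3 <;>
    rcases le_total (-u) (u+2) with h | h <;>
    simp only [max_def, min_def] <;> split_ifs <;> linarith

lemma f_nonneg (u : ℝ) : 0 ≤ f u := by rw [f_eq]; exact le_max_left _ _

lemma f_lip (a b : ℝ) : |f a - f b| ≤ |a - b| := by
  rw [f_eq, f_eq]
  calc |max 0 (min (-a) (a+2)) - max 0 (min (-b) (b+2))|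
      ≤ max |(0:ℝ) - 0| |min (-a) (a+2) - min (-b) (b+2)| := abs_max_sub_max_le_max _ _ _ _
    _ ≤ max |(0:ℝ) - 0| (max |(-a) - -b| |(a+2) - (b+2)|) := by
        exact max_le_max le_rfl (abs_min_sub_min_le_max _ _ _ _)
    _ ≤ |a - b| := by
        have h1 : |(-a) - -b| = |a - b| := by
          rw [show (-a) - -b = -(a - b) by ring, abs_neg]
        have h2 : |(a+2) - (b+2)| = |a - b| := by
          rw [show (a+2) - (b+2) = a - b by ring]
        apply max_le
        · simp [abs_nonneg]
        · exact max_le h1.le h2.le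

lemma continuous_f : Continuous f := by
  have : Continuous fun u : ℝ => max 0 (min (-u) (u + 2)) := continuous_const.max ((continuous_neg).min (continuous_id.add continuous_const))
  simpa [funext f_eq] using this


lemma f_le_one (u : ℝ) : f u ≤ 1 := by
  rw [f_eq]
  apply max_le (by norm_num)
  rcases le_total u (-1) with h | h
  · exact le_trans (min_le_right _ _) (by linarith)
  · exact le_trans (min_le_left _ _) (by linarith)

lemma f_eq_zero {u : ℝ} (h : u < -2 ∨ 0 < u) : f u = 0 := by
  unfold f
  rcases h with h | h <;> split_ifs <;> first | rfl | linarith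

/-- if `g s = T(s)0`, i.e. `(g s)(−1) = 0` and `(g s)(u) = f(u−s)`
for `u ≥ 0`, then the Cesàro means of the orbit of `0` converge to `0` in norm,
and indeed `‖(1/t) ∫₀ᵗ g s ds‖ ≤ 2/t` for `t ≥ 2`. -/
theorem stmt_15 (g : ℝ → E)
    (hg1 : ∀ s : ℝ, ∀ u : ↥Omega, (u : ℝ) = -1 → g s u = 0)
    (hg2 : ∀ s : ℝ, ∀ u : ↥Omega, (0:ℝ) ≤ (u : ℝ) → g s u = f ((u : ℝ) - s)) :
    (∀ t ≥ (2:ℝ), ‖(1 / t) • ∫ s in (0:ℝ)..t, g s‖ ≤ 2 / t) ∧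
    Tendsto (fun t : ℝ => ‖(1 / t) • ∫ s in (0:ℝ)..t, g s‖) atTop (nhds 0) := by
  have hglip : LipschitzWith 1 g := by
    apply LipschitzWith.of_dist_le_mul
    intro s s'
    rw [BoundedContinuousFunction.dist_le (by positivity)]
    intro u
    rcases u.2 with h | h
    · rw [hg1 s u (by simpa using h), hg1 s' u (by simpa using h)]
      simp [dist_self]
    · rw [hg2 s u h, hg2 s' u h, Real.dist_eq, Real.dist_eq]
      calc |f ((u:ℝ) - s) - f ((u:ℝ) - s')| ≤ |((u:ℝ) - s) - ((u:ℝ) - s')| := f_lip _ _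
        _ = 1 * |s - s'| := by
            rw [show ((u:ℝ) - s) - ((u:ℝ) - s') = -(s - s') by ring, abs_neg, one_mul]
  have hgint : ∀ t : ℝ, IntervalIntegrable g volume 0 t :=
    fun t => hglip.continuous.intervalIntegrable 0 t
  have key : ∀ t : ℝ, 2 ≤ t → ‖∫ s in (0:ℝ)..t, g s‖ ≤ 2 := by
    intro t ht
    apply (BoundedContinuousFunction.norm_le (by norm_num)).2
    intro u
    have heval : (∫ s in (0:ℝ)..t, g s) u = ∫ s in (0:ℝ)..t, g s u := by
      have := (ContinuousLinearMap.intervalIntegral_comp_comm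
        (BoundedContinuousFunction.evalCLM ℝ u) (hgint t)).symm
      simpa [BoundedContinuousFunction.evalCLM] using this
    rcases u.2 with h | h
    · have hz : ∀ s : ℝ, g s u = 0 := fun s => hg1 s u (by simpa using h)
      rw [heval]
      simp [hz]
    · have hrw : ∀ s : ℝ, g s u = f ((u:ℝ) - s) := fun s => hg2 s u h
      rw [heval]
      simp only [hrw]
      set c := (u : ℝ) with hc
      have hfc : Continuous fun s : ℝ => f (c - s) :=
        continuous_f.comp (continuous_const.sub continuous_id)
      have hnn : 0 ≤ ∫ s in (0:ℝ)..t, f (c - s) :=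
        intervalIntegral.integral_nonneg (by linarith) (fun s _ => f_nonneg _)
      have hind_int : Integrable (Set.indicator (Set.Icc c (c+2)) (fun _ => (1:ℝ))) := by
        rw [integrable_indicator_iff measurableSet_Icc]
        exact integrableOn_const (by simp [Real.volume_Icc])
      have hle : ∀ s : ℝ, f (c - s) ≤ Set.indicator (Set.Icc c (c+2)) (fun _ => (1:ℝ)) s := by
        intro s
        by_cases hs : s ∈ Set.Icc c (c+2)
        · rw [Set.indicator_of_mem hs]
          exact f_le_one _
        · rw [Set.indicator_of_notMem hs]
          simp only [Set.mem_Icc, not_and_or, not_le] at hs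
          apply le_of_eq
          apply f_eq_zero
          rcases hs with hs | hs
          · right; linarith
          · left; linarith
      have hub : (∫ s in (0:ℝ)..t, f (c - s)) ≤ 2 := by
        calc (∫ s in (0:ℝ)..t, f (c - s))
            ≤ ∫ s in (0:ℝ)..t, Set.indicator (Set.Icc c (c+2)) (fun _ => (1:ℝ)) s :=
              intervalIntegral.integral_mono_on (by linarith)
                (hfc.intervalIntegrable 0 t) hind_int.intervalIntegrable
                (fun s _ => hle s)
          _ = ∫ s in Set.Ioc (0:ℝ) t, Set.indicator (Set.Icc c (c+2)) (fun _ => (1:ℝ)) s :=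
              intervalIntegral.integral_of_le (by linarith)
          _ ≤ ∫ s, Set.indicator (Set.Icc c (c+2)) (fun _ => (1:ℝ)) s :=
              setIntegral_le_integral hind_int
                (Filter.Eventually.of_forall fun s =>
                  Set.indicator_nonneg (fun _ _ => zero_le_one) s)
          _ = 2 := by
              rw [integral_indicator_const _ measurableSet_Icc]
              simp [Real.volume_Icc]
      rw [Real.norm_eq_abs, abs_of_nonneg hnn]
      exact hub
  have hbound : ∀ t ≥ (2:ℝ), ‖(1 / t) • ∫ s in (0:ℝ)..t, g s‖ ≤ 2 / t := by
    intro t ht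
    have ht0 : 0 < t := by linarith
    rw [norm_smul (1/t) (∫ s in (0:ℝ)..t, g s), Real.norm_eq_abs, abs_of_pos (by positivity)]
    calc (1/t) * ‖∫ s in (0:ℝ)..t, g s‖ ≤ (1/t) * 2 :=
          mul_le_mul_of_nonneg_left (key t ht) (by positivity)
      _ = 2 / t := by ring
  refine ⟨hbound, ?_⟩
  apply squeeze_zero' (Filter.Eventually.of_forall fun t => norm_nonneg _)
    ((eventually_ge_atTop (2:ℝ)).mono fun t ht => hbound t ht)
  exact Tendsto.div_atTop tendsto_const_nhds tendsto_id
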